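/- arXiv:2306.14344 — 2 statements merged into one kernel-verified Lean document; each statement's English description precedes it below -/
import Mathlib

section
/- Let {σ_{a|x}} be a family of positive semidefinite matrices in M_n(ℂ) (indexed by a ∈ {1,...,k}, x ∈ {1,...,m}) such that Σₐ σ_{a|x} = σ for some fixed density matrix σ and all x. Then there exist a finite-dimensional Hilbert space, a density matrix ρ on the tensor product with ℂⁿ, and POVM elements M_{a|x} on the first factor such that σ_{a|x} = Tr₁((M_{a|x} ⊗ 1) ρ) for all a, x. -/
open Matrix
open scoped ComplexOrder

namespace GHJWaux

variable {n : ℕ} {S : Matrix (Fin n) (Fin n) ℂ}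

/-- functional calculus of a PSD matrix via its spectral decomposition -/
noncomputable def C (hS : S.PosSemidef) (f : ℝ → ℝ) : Matrix (Fin n) (Fin n) ℂ :=
  (hS.1.eigenvectorUnitary : Matrix (Fin n) (Fin n) ℂ) *
    Matrix.diagonal (fun i => (f (hS.1.eigenvalues i) : ℂ)) *
    (star (hS.1.eigenvectorUnitary : Matrix (Fin n) (Fin n) ℂ))

lemma C_mul (hS : S.PosSemidef) (f g : ℝ → ℝ) :
    C hS f * C hS g = C hS (fun t => f t * g t) := by
  set U : Matrix (Fin n) (Fin n) ℂ := (hS.1.eigenvectorUnitary : Matrix (Fin n) (Fin n) ℂ)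
    with hU
  have h1 : star U * U = 1 := (Matrix.mem_unitaryGroup_iff').mp hS.1.eigenvectorUnitary.2
  show U * Matrix.diagonal (fun i => (f (hS.1.eigenvalues i) : ℂ)) * star U *
      (U * Matrix.diagonal (fun i => (g (hS.1.eigenvalues i) : ℂ)) * star U)
      = U * Matrix.diagonal (fun i => ((f (hS.1.eigenvalues i) * g (hS.1.eigenvalues i) : ℝ) : ℂ))
        * star U
  simp only [Matrix.mul_assoc]
  rw [← Matrix.mul_assoc (star U) U, h1, Matrix.one_mul,
    ← Matrix.mul_assoc (Matrix.diagonal _) (Matrix.diagonal _), Matrix.diagonal_mul_diagonal]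
  simp only [← Complex.ofReal_mul]

lemma C_congr (hS : S.PosSemidef) {f g : ℝ → ℝ} (h : ∀ t, 0 ≤ t → f t = g t) :
    C hS f = C hS g := by
  unfold C
  have : (fun i => (f (hS.1.eigenvalues i) : ℂ)) = fun i => (g (hS.1.eigenvalues i) : ℂ) :=
    funext fun i => by rw [h _ (hS.eigenvalues_nonneg i)]
  rw [this]

lemma C_id (hS : S.PosSemidef) : C hS (fun t => t) = S := by
  unfold C
  exact hS.1.spectral_theorem.symm

lemma C_one (hS : S.PosSemidef) : C hS (fun _ => 1) = 1 := by
  unfold C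
  have h1 : (hS.1.eigenvectorUnitary : Matrix (Fin n) (Fin n) ℂ) *
      (star (hS.1.eigenvectorUnitary : Matrix (Fin n) (Fin n) ℂ)) = 1 :=
    (Matrix.mem_unitaryGroup_iff).mp hS.1.eigenvectorUnitary.2
  simp [Matrix.diagonal_one, h1]

lemma C_sub (hS : S.PosSemidef) (f g : ℝ → ℝ) :
    C hS f - C hS g = C hS (fun t => f t - g t) := by
  unfold C
  rw [← Matrix.sub_mul, ← Matrix.mul_sub, Matrix.diagonal_sub]
  simp only [← Complex.ofReal_sub]

lemma C_psd (hS : S.PosSemidef) {f : ℝ → ℝ} (hf : ∀ t, 0 ≤ t → 0 ≤ f t) :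
    (C hS f).PosSemidef := by
  have hD : (Matrix.diagonal (fun i => (f (hS.1.eigenvalues i) : ℂ))).PosSemidef := by
    refine Matrix.posSemidef_diagonal_iff.mpr fun i => ?_
    rw [Complex.zero_le_real]
    exact hf _ (hS.eigenvalues_nonneg i)
  have h2 := hD.mul_mul_conjTranspose_same (hS.1.eigenvectorUnitary : Matrix (Fin n) (Fin n) ℂ)
  rwa [← Matrix.star_eq_conjTranspose] at h2

lemma C_herm (hS : S.PosSemidef) (f : ℝ → ℝ) : (C hS f).IsHermitian := by
  have h := (C_psd hS (f := fun t => f t + 1 + |f t|)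
      (fun t _ => by linarith [neg_abs_le (f t), abs_nonneg (f t)])).1.sub
    (C_psd hS (f := fun t => 1 + |f t|) (fun t _ => by positivity)).1
  rw [C_sub, C_congr hS (g := f) (fun t _ => by ring)] at h
  exact h


/-- purification vector -/
noncomputable def V (hS : S.PosSemidef) : Fin n × Fin n → ℂ :=
  fun p => star (C hS Real.sqrt p.1 p.2)

/-- the purified density matrix -/
noncomputable def Rho (hS : S.PosSemidef) : Matrix (Fin n × Fin n) (Fin n × Fin n) ℂ :=
  Matrix.of fun p q => V hS p * star (V hS q)

lemma Rho_posSemidef (hS : S.PosSemidef) : (Rho hS).PosSemidef := by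
  rw [Matrix.posSemidef_iff_dotProduct_mulVec]
  constructor
  · ext p q
    simp only [Rho, conjTranspose_apply, Matrix.of_apply, star_mul', star_star]
    ring
  · intro x
    have : star x ⬝ᵥ (Rho hS) *ᵥ x
        = star (∑ q, star (V hS q) * x q) * (∑ q, star (V hS q) * x q) := by
      simp only [dotProduct, mulVec, dotProduct, Rho, Matrix.of_apply, star_sum, star_mul',
        star_star, Finset.mul_sum, Finset.sum_mul, Pi.star_apply]
      rw [Finset.sum_comm]
      refine Finset.sum_congr rfl fun p _ => Finset.sum_congr rfl fun q _ => by ring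
    rw [this]
    exact star_mul_self_nonneg _

lemma Rho_trace (hS : S.PosSemidef) (hStr : S.trace = 1) : (Rho hS).trace = 1 := by
  have hR : C hS Real.sqrt * C hS Real.sqrt = S := by
    rw [C_mul, C_congr hS (g := fun t => t) (fun t ht => Real.mul_self_sqrt ht), C_id]
  have hherm := C_herm hS Real.sqrt
  have h1 : ∀ s i, star (C hS Real.sqrt s i) = C hS Real.sqrt i s := by
    intro s i
    conv_rhs => rw [← hherm]
    simp [conjTranspose_apply]
  calc (Rho hS).trace = ∑ p : Fin n × Fin n, V hS p * star (V hS p) := by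
        simp [Matrix.trace, Matrix.diag, Rho]
    _ = (C hS Real.sqrt * C hS Real.sqrt).trace := by
        simp only [Matrix.trace, Matrix.diag, Matrix.mul_apply, Fintype.sum_prod_type]
        rw [Finset.sum_comm]
        refine Finset.sum_congr rfl fun a _ => Finset.sum_congr rfl fun b _ => ?_
        simp only [V, star_star]
        rw [h1]
    _ = 1 := by rw [hR, hStr]

lemma key_sum (hS : S.PosSemidef) (M : Matrix (Fin n) (Fin n) ℂ) (i j : Fin n) :
    ∑ t : Fin n, ((kroneckerMap (· * ·) M (1 : Matrix (Fin n) (Fin n) ℂ)) * Rho hS) (t, i) (t, j)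
      = (C hS Real.sqrt * Mᵀ * C hS Real.sqrt) i j := by
  have hherm := C_herm hS Real.sqrt
  have h1 : ∀ s i, star (C hS Real.sqrt s i) = C hS Real.sqrt i s := by
    intro s i
    conv_rhs => rw [← hherm]
    simp [conjTranspose_apply]
  calc ∑ t : Fin n, ((kroneckerMap (· * ·) M (1 : Matrix (Fin n) (Fin n) ℂ)) * Rho hS) (t, i) (t, j)
      = ∑ t : Fin n, ∑ s : Fin n, ∑ l : Fin n,
          M t s * (1 : Matrix (Fin n) (Fin n) ℂ) i l *
            (star (C hS Real.sqrt s l) * C hS Real.sqrt t j) := by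
        refine Finset.sum_congr rfl fun t _ => ?_
        rw [Matrix.mul_apply, Fintype.sum_prod_type]
        refine Finset.sum_congr rfl fun s _ => Finset.sum_congr rfl fun l _ => ?_
        simp [Rho, V, star_star, kroneckerMap_apply]
    _ = ∑ t : Fin n, ∑ s : Fin n,
          M t s * (star (C hS Real.sqrt s i) * C hS Real.sqrt t j) := by
        refine Finset.sum_congr rfl fun t _ => Finset.sum_congr rfl fun s _ => ?_
        rw [Finset.sum_eq_single i]
        · simp
        · intro l _ hl
          simp [Matrix.one_apply, (Ne.symm hl)]
        · simp
    _ = (C hS Real.sqrt * Mᵀ * C hS Real.sqrt) i j := by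
        simp only [Matrix.mul_apply, transpose_apply, Finset.sum_mul]
        refine Finset.sum_congr rfl fun t _ => Finset.sum_congr rfl fun s _ => ?_
        rw [h1]
        ring

end GHJWaux


/-- Gisin–HJW theorem: every no-signaling assemblage on `Mₙ(ℂ)` admits a quantum
realization: `σ_{a|x} = Tr₁((M_{a|x} ⊗ 1) ρ)` for a density matrix `ρ` and POVMs `M`. -/
theorem stmt8 {n m k : ℕ}
    (σ : Fin k → Fin m → Matrix (Fin n) (Fin n) ℂ)
    (S : Matrix (Fin n) (Fin n) ℂ) (hS : S.PosSemidef) (hStr : S.trace = 1)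
    (hpos : ∀ a x, (σ a x).PosSemidef)
    (hsum : ∀ x, ∑ a, σ a x = S) :
    ∃ (d : ℕ) (ρ : Matrix (Fin d × Fin n) (Fin d × Fin n) ℂ)
      (M : Fin k → Fin m → Matrix (Fin d) (Fin d) ℂ),
      ρ.PosSemidef ∧ ρ.trace = 1 ∧
      (∀ a x, (M a x).PosSemidef) ∧ (∀ x, ∑ a, M a x = 1) ∧
      ∀ a x i j, σ a x i j =
        ∑ t : Fin d,
          ((kroneckerMap (· * ·) (M a x) (1 : Matrix (Fin n) (Fin n) ℂ)) * ρ) (t, i) (t, j) := by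
  classical
  refine ⟨n, GHJWaux.Rho hS, ?_⟩
  by_cases hm : m = 0
  · subst hm
    exact ⟨fun _ _ => 0, GHJWaux.Rho_posSemidef hS, GHJWaux.Rho_trace hS hStr,
      fun a x => x.elim0, fun x => x.elim0, fun a x => x.elim0⟩
  -- notation
  set R : Matrix (Fin n) (Fin n) ℂ := GHJWaux.C hS Real.sqrt with hRdef
  set Rp : Matrix (Fin n) (Fin n) ℂ :=
    GHJWaux.C hS (fun t => if t = 0 then 0 else (Real.sqrt t)⁻¹) with hRpdef
  set P : Matrix (Fin n) (Fin n) ℂ := GHJWaux.C hS (fun t => if t = 0 then 0 else 1) with hPdef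
  have hRherm := GHJWaux.C_herm hS Real.sqrt
  have hRpherm := GHJWaux.C_herm hS (fun t => if t = 0 then 0 else (Real.sqrt t)⁻¹)
  have hPherm := GHJWaux.C_herm hS (fun t => if t = 0 then 0 else 1)
  have hRR : R * R = S := by
    rw [hRdef, GHJWaux.C_mul,
      GHJWaux.C_congr hS (g := fun t => t) (fun t ht => Real.mul_self_sqrt ht), GHJWaux.C_id]
  have hRpR : Rp * R = P := by
    rw [hRpdef, hRdef, hPdef, GHJWaux.C_mul]
    refine GHJWaux.C_congr hS (fun t ht => ?_)
    by_cases h0 : t = 0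
    · simp [h0]
    · have : Real.sqrt t ≠ 0 := Real.sqrt_ne_zero'.mpr (lt_of_le_of_ne ht (Ne.symm h0))
      simp [h0, inv_mul_cancel₀ this]
  have hRRp : R * Rp = P := by
    rw [hRpdef, hRdef, hPdef, GHJWaux.C_mul]
    refine GHJWaux.C_congr hS (fun t ht => ?_)
    by_cases h0 : t = 0
    · simp [h0]
    · have : Real.sqrt t ≠ 0 := Real.sqrt_ne_zero'.mpr (lt_of_le_of_ne ht (Ne.symm h0))
      simp [h0, mul_inv_cancel₀ this]
  have hRP : R * P = R := by
    rw [hRdef, hPdef, GHJWaux.C_mul]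
    refine GHJWaux.C_congr hS (fun t ht => ?_)
    by_cases h0 : t = 0
    · simp [h0]
    · simp [h0]
  have hPP : P * P = P := by
    rw [hPdef, GHJWaux.C_mul]
    refine GHJWaux.C_congr hS (fun t ht => ?_)
    by_cases h0 : t = 0 <;> simp [h0]
  have h1P : (1 : Matrix (Fin n) (Fin n) ℂ) - P
      = GHJWaux.C hS (fun t => if t = 0 then 1 else 0) := by
    rw [hPdef, ← GHJWaux.C_one hS, GHJWaux.C_sub]
    refine GHJWaux.C_congr hS (fun t ht => ?_)
    by_cases h0 : t = 0 <;> simp [h0]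
  -- the leftover part is PSD
  have h1Ppsd : ((1 : Matrix (Fin n) (Fin n) ℂ) - P).PosSemidef := by
    rw [h1P]
    refine GHJWaux.C_psd hS (fun t ht => ?_)
    by_cases h0 : t = 0 <;> simp [h0]
  -- the support projection absorbs each σ a x
  have hle : ∀ a x, (S - σ a x).PosSemidef := by
    intro a x
    have hsplit : σ a x + ∑ a' ∈ Finset.univ.erase a, σ a' x = S := by
      rw [← hsum x]
      exact Finset.add_sum_erase Finset.univ (fun a' => σ a' x) (Finset.mem_univ a)
    have : S - σ a x = ∑ a' ∈ Finset.univ.erase a, σ a' x := by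
      rw [← hsplit]; abel
    rw [this]
    exact Finset.sum_induction _ _ (fun A B hA hB => hA.add hB) Matrix.PosSemidef.zero
      (fun a' _ => hpos a' x)
  have hker : ∀ a x (v : Fin n → ℂ), S *ᵥ v = 0 → σ a x *ᵥ v = 0 := by
    intro a x v hv
    apply ((hpos a x).dotProduct_mulVec_zero_iff v).mp
    have h1 : 0 ≤ star v ⬝ᵥ σ a x *ᵥ v := (hpos a x).dotProduct_mulVec_nonneg v
    have h2 : 0 ≤ star v ⬝ᵥ (S - σ a x) *ᵥ v := (hle a x).dotProduct_mulVec_nonneg v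
    have h3 : star v ⬝ᵥ (S - σ a x) *ᵥ v = - (star v ⬝ᵥ σ a x *ᵥ v) := by
      rw [Matrix.sub_mulVec, dotProduct_sub, hv]
      simp
    rw [h3] at h2
    exact le_antisymm (neg_nonneg.mp h2) h1
  have hSP : S * P = S := by rw [← hRR, Matrix.mul_assoc, hRP]
  have hSQ : S * ((1 : Matrix (Fin n) (Fin n) ℂ) - P) = 0 := by
    rw [Matrix.mul_sub, Matrix.mul_one, hSP, sub_self]
  have hsig : ∀ a x, σ a x * P = σ a x := by
    intro a x
    have hz : σ a x * ((1 : Matrix (Fin n) (Fin n) ℂ) - P) = 0 := by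
      ext i j
      have hv : S *ᵥ (fun l => ((1 : Matrix (Fin n) (Fin n) ℂ) - P) l j) = 0 := by
        funext i'
        have := congrFun (congrFun hSQ i') j
        simpa [Matrix.mul_apply, Matrix.mulVec, dotProduct] using this
      have := congrFun (hker a x _ hv) i
      simpa [Matrix.mul_apply, Matrix.mulVec, dotProduct] using this
    have h' : σ a x * 1 - σ a x * P = 0 := by rw [← Matrix.mul_sub, hz]
    rw [Matrix.mul_one] at h'
    exact (sub_eq_zero.mp h').symm
  have hPsig : ∀ a x, P * σ a x = σ a x := by
    intro a x
    have h := congrArg Matrix.conjTranspose (hsig a x)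
    rwa [Matrix.conjTranspose_mul, hPherm.eq, (hpos a x).1.eq] at h
  -- k must be positive
  have hk : k ≠ 0 := by
    intro hk0
    subst hk0
    have h0 := hsum ⟨0, Nat.pos_of_ne_zero hm⟩
    simp only [Finset.univ_eq_empty, Finset.sum_empty] at h0
    rw [← h0] at hStr
    simp [Matrix.trace] at hStr
  have a₀ : Fin k := ⟨0, Nat.pos_of_ne_zero hk⟩
  have hMpsd : ∀ a x, ((Rp * σ a x * Rp)ᵀ
      + (if a = a₀ then ((1 : Matrix (Fin n) (Fin n) ℂ) - P)ᵀ else 0)).PosSemidef := by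
    intro a x
    have hbase : ((Rp * σ a x * Rp)ᵀ).PosSemidef := by
      have := ((hpos a x).conjTranspose_mul_mul_same Rp)
      rw [hRpherm.eq] at this
      exact this.transpose
    by_cases ha : a = a₀
    · rw [if_pos ha]
      exact hbase.add h1Ppsd.transpose
    · rw [if_neg ha, add_zero]
      exact hbase
  have hRpSRp : Rp * S * Rp = P := by
    rw [← hRR]
    calc Rp * (R * R) * Rp = (Rp * R) * (R * Rp) := by simp only [Matrix.mul_assoc]
      _ = P := by rw [hRpR, hRRp, hPP]
  have hMsum : ∀ x, ∑ a, ((Rp * σ a x * Rp)ᵀ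
      + (if a = a₀ then ((1 : Matrix (Fin n) (Fin n) ℂ) - P)ᵀ else 0)) = 1 := by
    intro x
    rw [Finset.sum_add_distrib, Finset.sum_ite_eq' Finset.univ a₀
      (fun _ => ((1 : Matrix (Fin n) (Fin n) ℂ) - P)ᵀ)]
    simp only [Finset.mem_univ, if_pos]
    rw [← Matrix.transpose_sum]
    have : ∑ a, Rp * σ a x * Rp = P := by
      calc ∑ a, Rp * σ a x * Rp = Rp * (∑ a, σ a x) * Rp := by
            rw [Finset.mul_sum, Finset.sum_mul]
        _ = P := by rw [hsum x, hRpSRp]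
    rw [this, ← Matrix.transpose_add]
    simp
  refine ⟨fun a x => (Rp * σ a x * Rp)ᵀ
      + (if a = a₀ then ((1 : Matrix (Fin n) (Fin n) ℂ) - P)ᵀ else 0),
    GHJWaux.Rho_posSemidef hS, GHJWaux.Rho_trace hS hStr, hMpsd, hMsum, ?_⟩
  intro a x i j
  rw [GHJWaux.key_sum hS]
  have hMT : ((Rp * σ a x * Rp)ᵀ
      + (if a = a₀ then ((1 : Matrix (Fin n) (Fin n) ℂ) - P)ᵀ else 0))ᵀ = Rp * σ a x * Rp
      + (if a = a₀ then (1 : Matrix (Fin n) (Fin n) ℂ) - P else 0) := by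
    simp only [Matrix.transpose_add, Matrix.transpose_transpose]
    congr 1
    by_cases ha : a = a₀ <;> simp [ha]
  have e1 : R * (Rp * σ a x * Rp) * R = σ a x := by
    calc R * (Rp * σ a x * Rp) * R = (R * Rp) * (σ a x * (Rp * R)) := by
          simp only [Matrix.mul_assoc]
      _ = P * (σ a x * P) := by rw [hRRp, hRpR]
      _ = σ a x := by rw [hsig a x, hPsig a x]
  have e2 : R * ((1 : Matrix (Fin n) (Fin n) ℂ) - P) * R = 0 := by
    rw [Matrix.mul_sub, Matrix.mul_one, hRP, sub_self, Matrix.zero_mul]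
  have key : R * ((Rp * σ a x * Rp)ᵀ
      + (if a = a₀ then ((1 : Matrix (Fin n) (Fin n) ℂ) - P)ᵀ else 0))ᵀ * R = σ a x := by
    rw [hMT, Matrix.mul_add, Matrix.add_mul, e1]
    by_cases ha : a = a₀
    · rw [if_pos ha, e2, add_zero]
    · rw [if_neg ha, Matrix.mul_zero, Matrix.zero_mul, add_zero]
  rw [key]
end

section
/- Suppose {σ_{a|x}} is a no-signaling assemblage on a unital C*-algebra B with associated state σ = Σₐ σ_{a|x}. Let (H, π, Ω) be the GNS representation of σ. Then for each a, x there exists a positive operator M_{a|x} ∈ π(B)′ with 0 ≤ M_{a|x} ≤ 1, Σₐ M_{a|x} = 1, and σ_{a|x}(b) = ⟨Ω, π(b) M_{a|x} Ω⟩ for all b ∈ B. -/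
set_option linter.unusedSectionVars false


open scoped ComplexOrder InnerProductSpace

section Aux

variable {B : Type*} [NormedRing B] [StarRing B] [CStarRing B] [NormedAlgebra ℂ B]
    [StarModule ℂ B] [CompleteSpace B]
    {H : Type*} [NormedAddCommGroup H] [InnerProductSpace ℂ H] [CompleteSpace H]

theorem herm_aux (τ : B →L[ℂ] ℂ) (hτ : ∀ b : B, 0 ≤ τ (star b * b)) (b c : B) :
    (starRingEnd ℂ) (τ (star c * b)) = τ (star b * c) := by
  have him : ∀ a : B, (τ (star a * a)).im = 0 := fun a => by
    have := (Complex.le_def.mp (hτ a)).2; simpa using this.symm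
  have h1 : (τ (star b * c)).im + (τ (star c * b)).im = 0 := by
    have h := him (b + c)
    have hx : star (b + c) * (b + c)
        = star b * b + (star b * c + (star c * b + star c * c)) := by
      rw [star_add]; simp only [add_mul, mul_add]; abel
    rw [hx] at h
    simp only [map_add, Complex.add_im, him b, him c] at h
    linarith
  have h2 : (τ (star b * c)).re - (τ (star c * b)).re = 0 := by
    have h := him (b + Complex.I • c)
    have hx : star (b + Complex.I • c) * (b + Complex.I • c)
        = star b * b + (Complex.I • (star b * c) +
          ((-Complex.I) • (star c * b) + star c * c)) := by
      rw [star_add, star_smul, Complex.star_def, Complex.conj_I]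
      simp only [add_mul, mul_add, smul_mul_assoc, mul_smul_comm, smul_smul, smul_add]
      match_scalars <;> simp [Complex.I_sq]
    rw [hx] at h
    simp only [map_add, map_smul, Complex.add_im, him b, him c, smul_eq_mul,
      Complex.mul_im, Complex.I_re, Complex.I_im, Complex.neg_re, Complex.neg_im,
      neg_mul, zero_mul, one_mul, mul_zero] at h
    linarith
  apply Complex.ext <;> simp [Complex.conj_re, Complex.conj_im] <;> linarith

theorem cs_aux (τ : B →L[ℂ] ℂ) (hτ : ∀ b : B, 0 ≤ τ (star b * b)) (b c : B) :
    ‖τ (star b * c)‖ * ‖τ (star b * c)‖ ≤ (τ (star b * b)).re * (τ (star c * c)).re := by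
  letI core : PreInnerProductSpace.Core ℂ B :=
  { inner := fun x y => τ (star x * y)
    conj_inner_symm := fun x y => herm_aux τ hτ x y
    re_inner_nonneg := fun x => by
      have := (Complex.le_def.mp (hτ x)).1; simpa using this
    add_left := fun x y z => by simp [star_add, add_mul]
    smul_left := fun x y r => by simp [star_smul, smul_mul_assoc] }
  have h := @InnerProductSpace.Core.inner_mul_inner_self_le ℂ B _ _ _ core b c
  have h' : ‖τ (star b * c)‖ * ‖τ (star c * b)‖
      ≤ (τ (star b * b)).re * (τ (star c * c)).re := h
  have h2 : ‖τ (star c * b)‖ = ‖τ (star b * c)‖ := by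
    rw [← herm_aux τ hτ b c, RCLike.norm_conj]
  rw [h2] at h'
  exact h'


/-- Vectors agreeing in inner products against the dense range are equal. -/
theorem vecext_aux (π : B →⋆ₐ[ℂ] (H →L[ℂ] H)) (Ω : H)
    (hcyc : Dense (Set.range fun b : B => π b Ω)) {u w : H}
    (h : ∀ b : B, ⟪π b Ω, u⟫_ℂ = ⟪π b Ω, w⟫_ℂ) : u = w := by
  apply ext_inner_left ℂ
  intro φ
  have hco : (fun x : H => ⟪x, u⟫_ℂ) = fun x : H => ⟪x, w⟫_ℂ := by
    refine Continuous.ext_on hcyc ?_ ?_ ?_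
    · exact continuous_id.inner continuous_const
    · exact continuous_id.inner continuous_const
    · rintro _ ⟨b, rfl⟩; exact h b
  exact congrFun hco φ

/-- Operators agreeing on the dense range are equal. -/
theorem opext_aux (π : B →⋆ₐ[ℂ] (H →L[ℂ] H)) (Ω : H)
    (hcyc : Dense (Set.range fun b : B => π b Ω)) {T T' : H →L[ℂ] H}
    (h : ∀ c : B, T (π c Ω) = T' (π c Ω)) : T = T' := by
  apply ContinuousLinearMap.coeFn_injective
  refine Continuous.ext_on hcyc T.continuous T'.continuous ?_
  rintro _ ⟨c, rfl⟩; exact h c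

theorem exists_op (π : B →⋆ₐ[ℂ] (H →L[ℂ] H)) (Ω : H)
    (hcyc : Dense (Set.range fun b : B => π b Ω))
    (τ : B →L[ℂ] ℂ) (hτ : ∀ b : B, 0 ≤ τ (star b * b))
    (hbd : ∀ b : B, (τ (star b * b)).re ≤ ‖π b Ω‖ ^ 2) :
    ∃ M : H →L[ℂ] H, M.IsPositive ∧ (∀ d : B, Commute M (π d)) ∧
      ∀ b c : B, ⟪π b Ω, M (π c Ω)⟫_ℂ = τ (star b * c) := by
  classical
  -- the densely-ranged linear map b ↦ π b Ω
  set L : B →ₗ[ℂ] H :=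
    { toFun := fun b => π b Ω
      map_add' := fun x y => by simp [map_add]
      map_smul' := fun r x => by simp [map_smul] } with hL
  set S : Submodule ℂ H := LinearMap.range L with hS
  -- key Cauchy-Schwarz bound
  have key : ∀ b c : B, ‖τ (star b * c)‖ ≤ ‖π b Ω‖ * ‖π c Ω‖ := by
    intro b c
    have h1 := cs_aux τ hτ b c
    have h2 := hbd b
    have h3 := hbd c
    have h4 : (0:ℝ) ≤ (τ (star b * b)).re := by
      have := (Complex.le_def.mp (hτ b)).1; simpa using this
    have h5 : (0:ℝ) ≤ (τ (star c * c)).re := by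
      have := (Complex.le_def.mp (hτ c)).1; simpa using this
    nlinarith [norm_nonneg (τ (star b * c)), norm_nonneg (π b Ω), norm_nonneg (π c Ω),
      mul_nonneg (norm_nonneg (π b Ω)) (norm_nonneg (π c Ω))]
  -- well-definedness in the right slot
  have wd : ∀ c b b' : B, π b Ω = π b' Ω → τ (star c * b) = τ (star c * b') := by
    intro c b b' h
    have h0 : π (b - b') Ω = 0 := by
      rw [map_sub, ContinuousLinearMap.sub_apply, h, sub_self]
    have h1 := key c (b - b')
    rw [h0, norm_zero, mul_zero] at h1
    have h2 : τ (star c * (b - b')) = 0 := by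
      rw [← norm_le_zero_iff]; exact h1
    have h3 : τ (star c * b) - τ (star c * b') = 0 := by
      rw [← map_sub, ← mul_sub]; exact h2
    exact sub_eq_zero.mp h3
  -- well-definedness in the left slot
  have wd2 : ∀ b c c' : B, π c Ω = π c' Ω → τ (star c * b) = τ (star c' * b) := by
    intro b c c' h
    have h0 : π (c - c') Ω = 0 := by
      rw [map_sub, ContinuousLinearMap.sub_apply, h, sub_self]
    have h1 := key (c - c') b
    rw [h0, norm_zero, zero_mul] at h1
    have h2 : τ (star (c - c') * b) = 0 := by
      rw [← norm_le_zero_iff]; exact h1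
    have h3 : τ (star c * b) - τ (star c' * b) = 0 := by
      rw [← map_sub, ← sub_mul, ← star_sub]; exact h2
    exact sub_eq_zero.mp h3
  -- the dense isometric inclusion of S
  have hd : DenseRange (⇑S.subtypeL) := by
    have h1 : Set.range (⇑S.subtypeL) = (S : Set H) := Subtype.range_coe
    rw [DenseRange, h1]
    have h2 : (S : Set H) = Set.range (fun b : B => π b Ω) := by
      rw [hS, LinearMap.coe_range]; rfl
    rw [h2]; exact hcyc
  have hui : IsUniformInducing (⇑S.subtypeL) :=
    (isometry_subtype_coe : Isometry ((↑) : S → H)).isUniformInducing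
  -- picking preimages
  have pickex : ∀ s : S, ∃ b : B, π b Ω = (s : H) := fun s => s.2
  set pick : S → B := fun s => (pickex s).choose with hpickdef
  have hpick : ∀ s : S, π (pick s) Ω = (s : H) := fun s => (pickex s).choose_spec
  -- the family of functionals
  set ℓ : B → (S →L[ℂ] ℂ) := fun c => LinearMap.mkContinuous
    { toFun := fun s => τ (star c * pick s)
      map_add' := fun s t => by
        show τ (star c * pick (s + t)) = τ (star c * pick s) + τ (star c * pick t)
        have hh : π (pick (s + t)) Ω = π (pick s + pick t) Ω := by
          rw [map_add, ContinuousLinearMap.add_apply, hpick s, hpick t, hpick (s + t)]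
          rfl
        rw [wd c _ _ hh, mul_add, map_add]
      map_smul' := fun r s => by
        show τ (star c * pick (r • s)) = (RingHom.id ℂ) r • τ (star c * pick s)
        have hh : π (pick (r • s)) Ω = π (r • pick s) Ω := by
          rw [map_smul, ContinuousLinearMap.smul_apply, hpick s, hpick (r • s)]
          rfl
        rw [wd c _ _ hh, mul_smul_comm, map_smul]
        rfl }
    (‖π c Ω‖) (fun s => by
      have h1 := key c (pick s)
      rw [hpick s] at h1
      exact h1) with hℓdef
  have hℓ : ∀ c b : B, (ℓ c).extend S.subtypeL (π b Ω) = τ (star c * b) := by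
    intro c b
    have hmem : π b Ω ∈ S := ⟨b, rfl⟩
    have hb : π b Ω = S.subtypeL (⟨π b Ω, hmem⟩ : S) := rfl
    rw [hb, ContinuousLinearMap.extend_eq (h_dense := hd) (h_e := hui)]
    exact wd c _ b (hpick _)
  -- the vector representatives
  set v : B → H := fun c =>
    (InnerProductSpace.toDual ℂ H).symm ((ℓ c).extend S.subtypeL) with hvdef
  have hv : ∀ c b : B, ⟪v c, π b Ω⟫_ℂ = τ (star c * b) := by
    intro c b
    rw [hvdef]
    simp only [InnerProductSpace.toDual_symm_apply]
    exact hℓ c b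
  have hv' : ∀ c b : B, ⟪π b Ω, v c⟫_ℂ = τ (star b * c) := by
    intro c b
    rw [← inner_conj_symm, hv c b]
    exact herm_aux τ hτ b c
  have hvnorm : ∀ c : B, ‖v c‖ ≤ ‖π c Ω‖ := by
    intro c
    rw [hvdef]
    rw [LinearIsometryEquiv.norm_map]
    calc ‖(ℓ c).extend S.subtypeL‖ ≤ ((1:NNReal):ℝ) * ‖ℓ c‖ := by
          refine ContinuousLinearMap.opNorm_extend_le (f := ℓ c) (e := S.subtypeL) hd ?_
          intro s
          rw [NNReal.coe_one, one_mul]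
          rfl
      _ ≤ ‖π c Ω‖ := by
          rw [NNReal.coe_one, one_mul]
          exact LinearMap.mkContinuous_norm_le _ (norm_nonneg _) _
  -- v is well-defined and linear along L
  have vwd : ∀ c c' : B, π c Ω = π c' Ω → v c = v c' := by
    intro c c' h
    refine vecext_aux π Ω hcyc (fun b => ?_)
    rw [hv' c b, hv' c' b]
    have h1 : (starRingEnd ℂ) (τ (star c * b)) = (starRingEnd ℂ) (τ (star c' * b)) := by
      rw [wd2 b c c' h]
    have h2 := herm_aux τ hτ b c
    have h3 := herm_aux τ hτ b c'
    rw [← h2, ← h3, h1]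
  have vadd : ∀ c c' : B, v (c + c') = v c + v c' := by
    intro c c'
    refine vecext_aux π Ω hcyc (fun b => ?_)
    rw [hv', inner_add_right, hv', hv', mul_add, map_add]
  have vsmul : ∀ (r : ℂ) (c : B), v (r • c) = r • v c := by
    intro r c
    refine vecext_aux π Ω hcyc (fun b => ?_)
    rw [hv', inner_smul_right, hv', mul_smul_comm, map_smul]
    rfl
  -- the operator
  set g : S →L[ℂ] H := LinearMap.mkContinuous
    { toFun := fun s => v (pick s)
      map_add' := fun s t => by
        show v (pick (s + t)) = v (pick s) + v (pick t)
        have hh : π (pick (s + t)) Ω = π (pick s + pick t) Ω := by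
          rw [map_add, ContinuousLinearMap.add_apply, hpick s, hpick t, hpick (s + t)]
          rfl
        rw [vwd _ _ hh, vadd]
      map_smul' := fun r s => by
        show v (pick (r • s)) = (RingHom.id ℂ) r • v (pick s)
        have hh : π (pick (r • s)) Ω = π (r • pick s) Ω := by
          rw [map_smul, ContinuousLinearMap.smul_apply, hpick s, hpick (r • s)]
          rfl
        rw [vwd _ _ hh, vsmul]
        rfl }
    1 (fun s => by
      rw [one_mul]
      calc ‖v (pick s)‖ ≤ ‖π (pick s) Ω‖ := hvnorm _
        _ = ‖s‖ := by rw [hpick s]; rfl) with hgdef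
  set M : H →L[ℂ] H := g.extend S.subtypeL with hMdef
  have hM : ∀ c : B, M (π c Ω) = v c := by
    intro c
    have hmem : π c Ω ∈ S := ⟨c, rfl⟩
    have hb : π c Ω = S.subtypeL (⟨π c Ω, hmem⟩ : S) := rfl
    rw [hMdef, hb, ContinuousLinearMap.extend_eq (h_dense := hd) (h_e := hui)]
    exact vwd _ _ (hpick _)
  have hMi : ∀ b c : B, ⟪π b Ω, M (π c Ω)⟫_ℂ = τ (star b * c) := by
    intro b c
    rw [hM c]
    exact hv' c b
  refine ⟨M, ?_, ?_, hMi⟩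
  · -- positivity
    constructor
    · -- self-adjoint
      have step1 : ∀ (c : B) (y : H), ⟪M y, π c Ω⟫_ℂ = ⟪y, M (π c Ω)⟫_ℂ := by
        intro c
        have hco : (fun y : H => ⟪M y, π c Ω⟫_ℂ) = fun y : H => ⟪y, M (π c Ω)⟫_ℂ := by
          refine Continuous.ext_on hcyc ?_ ?_ ?_
          · exact M.continuous.inner continuous_const
          · exact continuous_id.inner continuous_const
          · rintro _ ⟨b, rfl⟩
            show ⟪M (π b Ω), π c Ω⟫_ℂ = ⟪π b Ω, M (π c Ω)⟫_ℂ
            rw [← inner_conj_symm, hMi c b, hMi b c]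
            exact herm_aux τ hτ b c
        exact fun y => congrFun hco y
      intro y z
      have hco : (fun z : H => ⟪M y, z⟫_ℂ) = fun z : H => ⟪y, M z⟫_ℂ := by
        refine Continuous.ext_on hcyc ?_ ?_ ?_
        · exact continuous_const.inner continuous_id
        · exact continuous_const.inner M.continuous
        · rintro _ ⟨c, rfl⟩
          show ⟪M y, π c Ω⟫_ℂ = ⟪y, M (π c Ω)⟫_ℂ
          exact step1 c y
      exact congrFun hco z
    · -- nonneg
      intro y
      have hsub : Set.range (fun b : B => π b Ω) ⊆ {z : H | 0 ≤ M.reApplyInnerSelf z} := by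
        rintro _ ⟨b, rfl⟩
        show (0:ℝ) ≤ M.reApplyInnerSelf (π b Ω)
        rw [ContinuousLinearMap.reApplyInnerSelf_apply]
        rw [← inner_conj_symm, hMi b b]
        have := (Complex.le_def.mp (hτ b)).1
        simpa using this
      have hcl : IsClosed {z : H | 0 ≤ M.reApplyInnerSelf z} :=
        isClosed_le continuous_const M.reApplyInnerSelf_continuous
      have := hcl.closure_subset_iff.mpr hsub
      rw [hcyc.closure_eq] at this
      exact this (Set.mem_univ y)
  · -- commutation
    intro d
    show M * π d = π d * M
    refine opext_aux π Ω hcyc (fun c => ?_)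
    rw [ContinuousLinearMap.mul_apply, ContinuousLinearMap.mul_apply]
    have h1 : π d (π c Ω) = π (d * c) Ω := by
      rw [map_mul]; rfl
    rw [h1, hM, hM]
    refine vecext_aux π Ω hcyc (fun b => ?_)
    rw [hv']
    have h2 : ⟪π b Ω, π d (v c)⟫_ℂ = ⟪π (star d * b) Ω, v c⟫_ℂ := by
      have h3 : π (star d * b) Ω = π (star d) (π b Ω) := by
        rw [map_mul]; rfl
      rw [h3, map_star, ContinuousLinearMap.star_eq_adjoint,
        ContinuousLinearMap.adjoint_inner_left]
    rw [h2, hv', star_mul, star_star, mul_assoc]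

end Aux

/-- In the GNS representation of the marginal state of a no-signaling assemblage, the
assemblage is implemented by a POVM in the commutant of the image of the representation. -/
theorem stmt9 {B : Type*} [NormedRing B] [StarRing B] [CStarRing B] [NormedAlgebra ℂ B]
    [StarModule ℂ B] [CompleteSpace B]
    {H : Type*} [NormedAddCommGroup H] [InnerProductSpace ℂ H] [CompleteSpace H]
    {m k : ℕ}
    (σ : Fin k → Fin m → (B →L[ℂ] ℂ))
    (hpos : ∀ a x, ∀ b : B, 0 ≤ σ a x (star b * b))
    (π : B →⋆ₐ[ℂ] (H →L[ℂ] H)) (Ω : H) (hΩ : ‖Ω‖ = 1)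
    (hcyc : Dense (Set.range fun b : B => π b Ω))
    (hGNS : ∀ x, ∀ b : B, ∑ a, σ a x b = ⟪Ω, π b Ω⟫_ℂ) :
    ∃ M : Fin k → Fin m → (H →L[ℂ] H),
      (∀ a x, (M a x).IsPositive) ∧
      (∀ a x, ((1 : H →L[ℂ] H) - M a x).IsPositive) ∧
      (∀ x, ∑ a, M a x = 1) ∧
      (∀ a x, ∀ b : B, Commute (M a x) (π b)) ∧
      ∀ a x, ∀ b : B, σ a x b = ⟪Ω, π b (M a x Ω)⟫_ℂ := by
  classical
  -- inner products of vectors in the dense range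
  have hin : ∀ b c : B, ⟪Ω, π (star b * c) Ω⟫_ℂ = ⟪π b Ω, π c Ω⟫_ℂ := by
    intro b c
    have h1 : π (star b * c) Ω = π (star b) (π c Ω) := by rw [map_mul]; rfl
    rw [h1, map_star, ContinuousLinearMap.star_eq_adjoint,
      ContinuousLinearMap.adjoint_inner_right]
  -- the total is the norm squared
  have hsum_re : ∀ x (b : B), ∑ a, (σ a x (star b * b)).re = ‖π b Ω‖ ^ 2 := by
    intro x b
    have h1 := hGNS x (star b * b)
    have h2 : (∑ a, σ a x (star b * b)).re = ‖π b Ω‖ ^ 2 := by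
      rw [h1, hin b b]
      have h3 := @inner_self_eq_norm_sq ℂ H _ _ _ (π b Ω)
      simpa using h3
    rw [← h2, Complex.re_sum]
  have hbd : ∀ a x (b : B), ((σ a x) (star b * b)).re ≤ ‖π b Ω‖ ^ 2 := by
    intro a x b
    rw [← hsum_re x b]
    refine Finset.single_le_sum (f := fun a' => ((σ a' x) (star b * b)).re)
      (fun a' _ => ?_) (Finset.mem_univ a)
    have := (Complex.le_def.mp (hpos a' x b)).1
    simpa using this
  choose Mf h1 h2 h3 using fun a x =>
    exists_op π Ω hcyc (σ a x) (fun b => hpos a x b) (hbd a x)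
  refine ⟨Mf, h1, ?_, ?_, h2, ?_⟩
  · -- 1 - M is positive
    intro a x
    constructor
    · exact ContinuousLinearMap.isSelfAdjoint_iff_isSymmetric.mp ((IsSelfAdjoint.one (H →L[ℂ] H)).sub (ContinuousLinearMap.isSelfAdjoint_iff_isSymmetric.mpr (h1 a x).1))
    · intro y
      have hsub : Set.range (fun b : B => π b Ω)
          ⊆ {z : H | 0 ≤ (1 - Mf a x).reApplyInnerSelf z} := by
        rintro _ ⟨b, rfl⟩
        show (0:ℝ) ≤ (1 - Mf a x).reApplyInnerSelf (π b Ω)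
        rw [ContinuousLinearMap.reApplyInnerSelf_apply]
        rw [ContinuousLinearMap.sub_apply, ContinuousLinearMap.one_apply,
          inner_sub_left]
        have hA : (⟪π b Ω, π b Ω⟫_ℂ).re = ‖π b Ω‖ ^ 2 := by
          have h5 := @inner_self_eq_norm_sq ℂ H _ _ _ (π b Ω)
          simpa using h5
        have hB : ⟪Mf a x (π b Ω), π b Ω⟫_ℂ = (starRingEnd ℂ) (σ a x (star b * b)) := by
          rw [← inner_conj_symm, h3 a x b b]
        have := hbd a x b
        have hre : (⟪π b Ω, π b Ω⟫_ℂ - ⟪Mf a x (π b Ω), π b Ω⟫_ℂ).re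
            = (⟪π b Ω, π b Ω⟫_ℂ).re - (⟪Mf a x (π b Ω), π b Ω⟫_ℂ).re := Complex.sub_re _ _
        rw [RCLike.re_to_complex, hre, hA, hB]
        simp only [Complex.conj_re]
        linarith
      have hcl : IsClosed {z : H | 0 ≤ (1 - Mf a x).reApplyInnerSelf z} :=
        isClosed_le continuous_const (1 - Mf a x).reApplyInnerSelf_continuous
      have := hcl.closure_subset_iff.mpr hsub
      rw [hcyc.closure_eq] at this
      exact this (Set.mem_univ y)
  · -- sum equals one
    intro x
    refine opext_aux π Ω hcyc (fun c => ?_)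
    rw [ContinuousLinearMap.sum_apply, ContinuousLinearMap.one_apply]
    refine vecext_aux π Ω hcyc (fun b => ?_)
    rw [inner_sum]
    have h4 : ∀ a, ⟪π b Ω, Mf a x (π c Ω)⟫_ℂ = σ a x (star b * c) := fun a => h3 a x b c
    rw [Finset.sum_congr rfl (fun a _ => h4 a), hGNS x (star b * c), hin b c]
  · -- the assemblage formula
    intro a x b
    have hΩ1 : π (1:B) Ω = Ω := by rw [map_one]; rfl
    have e1 : ⟪Ω, π b (Mf a x Ω)⟫_ℂ = ⟪π (star b) Ω, Mf a x (π (1:B) Ω)⟫_ℂ := by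
      rw [hΩ1]
      rw [map_star, ContinuousLinearMap.star_eq_adjoint,
        ContinuousLinearMap.adjoint_inner_left]
    rw [e1, h3 a x (star b) 1, star_star, mul_one]
end
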